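/- Let N be a finite set, η : N → N a permutation with η(β) = α, and v : 2^N → ℝ a game such that (a) for every S ⊆ N\{β}, the marginal contribution v(S∪{β})−v(S) is either 0 or 1, likewise for α, and (b) whenever v(S∪{β})−v(S)=1 for S ⊆ N\{β}, then v(η⁻¹(S)∪{α})−v(η⁻¹(S))=1. Then the Shapley value of β is at most that of α. If moreover there exists T ⊆ N\{α} with v(T∪{α})−v(T)=1 but v(η(T)∪{β})−v(η(T))≠1, then the inequality is strict. -/

import Mathlib

open Finset

variable {N : Type*} [Fintype N] [DecidableEq N]

/-- The set of players preceding `i` in the ordering `π` of the players. -/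
def preds (π : Fin (Fintype.card N) ≃ N) (i : N) : Finset N :=
  Finset.univ.filter (fun j => π.symm j < π.symm i)

/-- The Shapley value of player `i` in the game `v`: the average over all orderings
of the players of the marginal contribution of `i`. -/
noncomputable def shapley (v : Finset N → ℝ) (i : N) : ℝ :=
  (∑ π : Fin (Fintype.card N) ≃ N, (v (insert i (preds π i)) - v (preds π i))) /
    (Nat.factorial (Fintype.card N))

/-- The Shapley coefficient `c(j,m) = j!(m−j−1)!/m!`. -/
noncomputable def shapCoef (j m : ℕ) : ℝ :=
  (Nat.factorial j * Nat.factorial (m - j - 1) : ℝ) / (Nat.factorial m : ℝ)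

/-- The Shapley value of `i` written as a sum over coalitions `S ⊆ N \ {i}`. -/
noncomputable def shapleySum (v : Finset N → ℝ) (i : N) : ℝ :=
  ∑ S ∈ (Finset.univ.erase i).powerset,
    shapCoef S.card (Fintype.card N) * (v (insert i S) - v S)

/-- If the marginal contributions of `α` and `β` are 0/1-valued, and every coalition
where `β` contributes 1 maps via `η⁻¹` (where `η` is a permutation with `η β = α`)
to a coalition where `α` contributes 1, then `Sh(β) ≤ Sh(α)`; strictly so when some
coalition witnesses `α` contributing 1 but the corresponding coalition for `β` not. -/
lemma preds_trans (π : Fin (Fintype.card N) ≃ N) (ζ : Equiv.Perm N) (i : N) :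
    preds (π.trans ζ) (ζ i) = (preds π i).image ζ := by
  ext j
  simp only [preds, mem_filter, mem_univ, true_and, Finset.mem_image]
  constructor
  · intro h
    refine ⟨ζ.symm j, ?_, ζ.apply_symm_apply j⟩
    simpa using h
  · rintro ⟨x, hx, rfl⟩
    simpa using hx

set_option linter.unusedSectionVars false in
lemma not_mem_preds (π : Fin (Fintype.card N) ≃ N) (i : N) : i ∉ preds π i := by
  simp [preds]


lemma exists_preds_eq (i : N) (S : Finset N) (hiS : i ∉ S) :
    ∃ π : Fin (Fintype.card N) ≃ N, preds π i = S := by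
  classical
  set R : Finset N := Finset.univ \ insert i S with hR
  set L : List N := S.toList ++ i :: R.toList with hL
  have hnd : L.Nodup := by
    refine List.Nodup.append (S.nodup_toList) ?_ ?_
    · refine List.nodup_cons.2 ⟨?_, R.nodup_toList⟩
      simp [hR]
    · intro x hxS hx2
      have hxS' : x ∈ S := by simpa using hxS
      rcases List.mem_cons.1 hx2 with rfl | hxR
      · exact hiS hxS'
      · have : x ∈ R := by simpa using hxR
        simp [hR, hxS'] at this
  have hmem : ∀ x : N, x ∈ L := by
    intro x
    by_cases hx : x ∈ S
    · exact List.mem_append.2 (Or.inl (by simpa using hx))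
    · by_cases hxi : x = i
      · subst hxi; exact List.mem_append.2 (Or.inr (List.mem_cons_self))
      · refine List.mem_append.2 (Or.inr (List.mem_cons.2 (Or.inr ?_)))
        simp [hR, hx, hxi]
  have hlen : L.length = Fintype.card N := by
    have h1 : L.toFinset = Finset.univ := by
      ext x; simp [hmem x]
    have := List.toFinset_card_of_nodup hnd
    rw [h1] at this
    simp [← this]
  refine ⟨(finCongr hlen.symm).trans (hnd.getEquivOfForallMemList L hmem), ?_⟩
  have hidx : ∀ j : N,
      ((finCongr hlen.symm).trans (hnd.getEquivOfForallMemList L hmem)).symm j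
        = finCongr hlen ((hnd.getEquivOfForallMemList L hmem).symm j) := by
    intro j; rfl
  have hiL : List.idxOf i L = S.toList.length := by
    rw [hL, List.idxOf_append_of_notMem (by simpa using hiS)]
    simp
  ext j
  simp only [preds, mem_filter, mem_univ, true_and, hidx]
  have hlt : ∀ a b : Fin L.length, finCongr hlen a < finCongr hlen b ↔ (a : ℕ) < (b : ℕ) := by
    intro a b; rfl
  rw [hlt]
  have hvali : (((hnd.getEquivOfForallMemList L hmem).symm i : Fin L.length) : ℕ)
      = List.idxOf i L := rfl
  have hvalj : (((hnd.getEquivOfForallMemList L hmem).symm j : Fin L.length) : ℕ)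
      = List.idxOf j L := rfl
  rw [hvali, hvalj, hiL]
  constructor
  · intro h
    by_contra hj
    have : List.idxOf j L = S.toList.length + List.idxOf j (i :: R.toList) := by
      rw [hL, List.idxOf_append_of_notMem (by simpa using hj)]
    omega
  · intro hj
    have hj' : j ∈ S.toList := by simpa using hj
    rw [hL, List.idxOf_append_of_mem hj']
    exact List.idxOf_lt_length_iff.2 hj'

theorem shapley_dominance (v : Finset N → ℝ) (hv : v ∅ = 0) (η : Equiv.Perm N)
    (α β : N) (hηβ : η β = α)
    (h01β : ∀ S : Finset N, S ⊆ Finset.univ.erase β →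
      v (insert β S) - v S = 0 ∨ v (insert β S) - v S = 1)
    (h01α : ∀ S : Finset N, S ⊆ Finset.univ.erase α →
      v (insert α S) - v S = 0 ∨ v (insert α S) - v S = 1)
    (hdom : ∀ S : Finset N, S ⊆ Finset.univ.erase β → v (insert β S) - v S = 1 →
      v (insert α (S.image ⇑η.symm)) - v (S.image ⇑η.symm) = 1) :
    shapley v β ≤ shapley v α ∧
      ((∃ T : Finset N, T ⊆ Finset.univ.erase α ∧ v (insert α T) - v T = 1 ∧
          v (insert β (T.image ⇑η)) - v (T.image ⇑η) ≠ 1) →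
        shapley v β < shapley v α) := by
  classical
  set ζ : Equiv.Perm N := (Equiv.swap β (η α)).trans η.symm with hζ
  have hζβ : ζ β = α := by simp [hζ, hηβ]
  have hsub : ∀ S : Finset N, β ∉ S → S ⊆ Finset.univ.erase β :=
    fun S h => Finset.subset_erase.2 ⟨Finset.subset_univ S, h⟩
  have hsubα : ∀ S : Finset N, α ∉ S → S ⊆ Finset.univ.erase α :=
    fun S h => Finset.subset_erase.2 ⟨Finset.subset_univ S, h⟩
  -- if β contributes 1 to S then η α ∉ S
  have hm1 : ∀ S : Finset N, β ∉ S → v (insert β S) - v S = 1 → η α ∉ S := by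
    intro S hβS h1 hmem
    have hd := hdom S (hsub S hβS) h1
    have hαmem : α ∈ S.image ⇑η.symm :=
      Finset.mem_image.2 ⟨η α, hmem, by simp⟩
    rw [Finset.insert_eq_self.2 hαmem] at hd
    simp at hd
  -- when β, η α ∉ S, image ζ = image η.symm
  have himg : ∀ S : Finset N, β ∉ S → η α ∉ S → S.image ⇑ζ = S.image ⇑η.symm := by
    intro S hβS hηαS
    apply Finset.image_congr
    intro x hx
    simp only [hζ, Equiv.trans_apply]
    rw [Equiv.swap_apply_of_ne_of_ne]
    · rintro rfl; exact hβS hx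
    · rintro rfl; exact hηαS hx
  -- functions
  set G : (Fin (Fintype.card N) ≃ N) → ℝ :=
    fun π => v (insert β (preds π β)) - v (preds π β) with hG
  set F : (Fin (Fintype.card N) ≃ N) → ℝ :=
    fun π => v (insert α (preds π α)) - v (preds π α) with hF
  -- key termwise inequality
  have hkey : ∀ π : Fin (Fintype.card N) ≃ N, G π ≤ F (π.trans ζ) := by
    intro π
    have hTr : preds (π.trans ζ) α = (preds π β).image ⇑ζ := by
      rw [← hζβ]; exact preds_trans π ζ β
    rcases h01β (preds π β) (hsub _ (not_mem_preds π β)) with h0 | h1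
    · rw [hG]
      simp only [h0]
      rcases h01α (preds (π.trans ζ) α) (hsubα _ (not_mem_preds _ α)) with h | h <;>
        simp [hF, h]
    · have hηα := hm1 _ (not_mem_preds π β) h1
      have heq := himg _ (not_mem_preds π β) hηα
      have := hdom _ (hsub _ (not_mem_preds π β)) h1
      simp only [hG, hF, h1, hTr, heq, this, le_refl]
  -- reindexing
  let e : (Fin (Fintype.card N) ≃ N) ≃ (Fin (Fintype.card N) ≃ N) :=
    Equiv.equivCongr (Equiv.refl _) ζ
  have he : ∀ π, e π = π.trans ζ := by
    intro π; ext x; rfl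
  have hsum : ∑ π : Fin (Fintype.card N) ≃ N, F (π.trans ζ)
      = ∑ π : Fin (Fintype.card N) ≃ N, F π := by
    calc ∑ π : Fin (Fintype.card N) ≃ N, F (π.trans ζ)
        = ∑ π : Fin (Fintype.card N) ≃ N, F (e π) := by
          apply Finset.sum_congr rfl; intro π _; rw [he]
      _ = _ := Equiv.sum_comp e F
  have hfac : (0 : ℝ) < (Nat.factorial (Fintype.card N) : ℝ) := by
    exact_mod_cast Nat.factorial_pos _
  constructor
  · have : ∑ π : Fin (Fintype.card N) ≃ N, G π ≤ ∑ π : Fin (Fintype.card N) ≃ N, F π := by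
      rw [← hsum]
      exact Finset.sum_le_sum fun π _ => hkey π
    unfold shapley
    exact div_le_div_of_nonneg_right this hfac.le
  · rintro ⟨T, hTsub, hT1, hTne⟩
    have hαT : α ∉ T := fun h => (Finset.mem_erase.1 (hTsub h)).1 rfl
    set S₁ : Finset N := T.image ⇑ζ.symm with hS₁
    have hβS₁ : β ∉ S₁ := by
      rw [hS₁]
      intro h
      rcases Finset.mem_image.1 h with ⟨t, ht, hteq⟩
      have : t = ζ β := by rw [← hteq]; simp
      rw [hζβ] at this
      exact hαT (this ▸ ht)
    obtain ⟨π₀, hπ₀⟩ := exists_preds_eq β S₁ hβS₁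
    have hTr₀ : preds (π₀.trans ζ) α = T := by
      rw [← hζβ, preds_trans, hπ₀, hS₁, Finset.image_image]
      simp
    have hGπ₀ : G π₀ = 0 := by
      rcases h01β S₁ (hsub _ hβS₁) with h0 | h1
      · simp [hG, hπ₀, h0]
      · exfalso
        have hηα : η α ∉ S₁ := hm1 S₁ hβS₁ h1
        have hS₁η : S₁ = T.image ⇑η := by
          rw [hS₁]
          apply Finset.image_congr
          intro t ht
          have ht' : t ∈ T := Finset.mem_coe.1 ht
          have h1' : ζ.symm t = Equiv.swap β (η α) (η t) := by simp [hζ]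
          have hηtβ : η t ≠ β := by
            intro hb
            apply hηα
            rw [hS₁]
            refine Finset.mem_image.2 ⟨t, ht', ?_⟩
            rw [h1', hb, Equiv.swap_apply_left]
          have hηtηα : η t ≠ η α := by
            intro hb
            exact hαT ((η.injective hb) ▸ ht')
          show ζ.symm t = η t
          rw [h1', Equiv.swap_apply_of_ne_of_ne hηtβ hηtηα]
        rw [hS₁η] at h1
        exact hTne h1
    have hstrict : G π₀ < F (π₀.trans ζ) := by
      rw [hGπ₀, hF]
      simp only [hTr₀, hT1]
      norm_num
    have hlt : ∑ π : Fin (Fintype.card N) ≃ N, G π < ∑ π : Fin (Fintype.card N) ≃ N, F π := by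
      rw [← hsum]
      exact Finset.sum_lt_sum (fun π _ => hkey π) ⟨π₀, Finset.mem_univ _, hstrict⟩
    unfold shapley
    exact div_lt_div_of_pos_right hlt hfac
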